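/- Let Γ = G *_φ H be the free product of groups G and H with amalgamated subgroups A ≤ G and B ≤ H with respect to an isomorphism φ : A → B (so Γ is the pushout of the inclusions of a group isomorphic to A into G and into H, and G and H embed canonically into Γ). Let G′ ≤ G and H′ ≤ H be subgroups such that, setting A′ = G′ ∩ A and B′ = H′ ∩ B, one has φ(A′) = B′. Let φ′ : A′ → B′ be the restriction of φ, and let Γ′ = ⟨G′, H′⟩ be the subgroup of Γ generated by the images of G′ and H′. Then Γ′ is naturally isomorphic to the free product G′ *_{φ′} H′ of G′ and H′ with amalgamated subgroups A′ and B′; that is, the canonical homomorphism from the amalgamated free product G′ *_{φ′} H′ to Γ is injective with image Γ′. -/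

import Mathlib

open Monoid Subgroup Function Monoid.PushoutI

namespace AmalgAux

theorem isComplement_right_eq {G : Type} [Group G] {N : Subgroup G} {S : Set G}
    (h : IsComplement (N : Set G) S) {s₁ s₂ : G} (h₁ : s₁ ∈ S) (h₂ : s₂ ∈ S)
    (hN : s₁ * s₂⁻¹ ∈ N) : s₁ = s₂ := by
  obtain ⟨p, _, hu⟩ := h.existsUnique s₁
  have e1 := hu (⟨⟨s₁ * s₂⁻¹, hN⟩, ⟨s₂, h₂⟩⟩ : ↥(N : Set G) × ↥S)
    (inv_mul_cancel_right s₁ s₂)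
  have e2 := hu (⟨⟨1, N.one_mem⟩, ⟨s₁, h₁⟩⟩ : ↥(N : Set G) × ↥S) (one_mul s₁)
  have := congrArg (fun x : ↥(N : Set G) × ↥S => (x.2 : G)) (e1.trans e2.symm)
  simpa using this.symm

theorem exists_isComplement_superset {G : Type} [Group G] (N : Subgroup G) (S₀ : Set G)
    (h : ∀ s₁ ∈ S₀, ∀ s₂ ∈ S₀, s₁ * s₂⁻¹ ∈ N → s₁ = s₂) :
    ∃ S : Set G, IsComplement (N : Set G) S ∧ S₀ ⊆ S := by
  classical
  let mk : G → Quotient (QuotientGroup.rightRel N) := Quotient.mk _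
  have hmk : ∀ x y : G, mk x = mk y ↔ y * x⁻¹ ∈ N := fun x y => by
    rw [Quotient.eq]
    exact QuotientGroup.rightRel_apply
  let f : Quotient (QuotientGroup.rightRel N) → G :=
    fun q => if hq : ∃ s ∈ S₀, mk s = q then hq.choose else q.out
  have hf : ∀ q, mk (f q) = q := by
    intro q
    by_cases hq : ∃ s ∈ S₀, mk s = q
    · simp only [f, dif_pos hq]
      exact hq.choose_spec.2
    · simp only [f, dif_neg hq]
      exact Quotient.out_eq q
  have hS₀ : ∀ s ∈ S₀, f (mk s) = s := by
    intro s hs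
    have hq : ∃ s' ∈ S₀, mk s' = mk s := ⟨s, hs, rfl⟩
    simp only [f, dif_pos hq]
    have hm : s * hq.choose⁻¹ ∈ N := (hmk hq.choose s).mp hq.choose_spec.2
    have hm' : hq.choose * s⁻¹ ∈ N := by
      have := N.inv_mem hm
      rwa [mul_inv_rev, inv_inv] at this
    exact h _ hq.choose_spec.1 _ hs hm'
  refine ⟨Set.range f,
    Subgroup.isComplement_iff_existsUnique_mul_inv_mem.mpr fun g => ?_,
    fun s hs => ⟨mk s, hS₀ s hs⟩⟩
  refine ⟨⟨f (mk g), mk g, rfl⟩, ?_, ?_⟩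
  · exact (hmk (f (mk g)) g).mp (hf (mk g))
  · rintro ⟨s, q, rfl⟩ hsN
    have : mk (f q) = mk g := (hmk (f q) g).mpr hsN
    have hq : q = mk g := by rw [← hf q, this]
    exact Subtype.ext (by rw [hq])


variable {ι : Type} {H H' : Type} [Group H] [Group H']
  {G : ι → Type} {G' : ι → Type} [∀ i, Group (G i)] [∀ i, Group (G' i)]
  {φ : ∀ i, H →* G i} {φ' : ∀ i, H' →* G' i}
  (e : ∀ i, G' i →* G i) (eH : H' →* H)

theorem exists_transversal_ext (d' : Monoid.PushoutI.NormalWord.Transversal φ')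
    (hφ : ∀ i, Injective (φ i)) (he : ∀ i, Injective (e i))
    (hsat : ∀ i (g' : G' i), e i g' ∈ (φ i).range → g' ∈ (φ' i).range) :
    ∃ d : Monoid.PushoutI.NormalWord.Transversal φ, ∀ i, ∀ s ∈ d'.set i, e i s ∈ d.set i := by
  have key : ∀ i, ∃ S : Set (G i), IsComplement ((φ i).range : Set (G i)) S ∧
      (e i '' d'.set i) ⊆ S := by
    intro i
    apply exists_isComplement_superset
    rintro _ ⟨t₁, ht₁, rfl⟩ _ ⟨t₂, ht₂, rfl⟩ hN
    have h12 : t₁ * t₂⁻¹ ∈ (φ' i).range := by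
      apply hsat
      rw [map_mul, map_inv]
      exact hN
    exact congrArg (e i) (isComplement_right_eq (d'.compl i) ht₁ ht₂ h12)
  choose S hScompl hSsub using key
  refine ⟨⟨hφ, S, ?_, hScompl⟩, fun i s hs => hSsub i ⟨s, hs, rfl⟩⟩
  · -- 1 ∈ S i : since e i 1 = 1 and 1 ∈ d'.set i
    intro i
    have : e i 1 ∈ S i := hSsub i ⟨1, d'.one_mem i, rfl⟩
    rwa [map_one] at this

end AmalgAux

namespace AmalgAux2

open Monoid.PushoutI Monoid.PushoutI.NormalWord Monoid.CoprodI
open AmalgAux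

variable {ι : Type} {H H' : Type} [Group H] [Group H']
  {G : ι → Type} {G' : ι → Type} [∀ i, Group (G i)] [∀ i, Group (G' i)]
  {φ : ∀ i, H →* G i} {φ' : ∀ i, H' →* G' i}
  (e : ∀ i, G' i →* G i) (eH : H' →* H)

def wordMap (w : Word G') : List (Σ i, G i) :=
  w.toList.map fun l => ⟨l.1, e l.1 l.2⟩

def wordMapW (he : ∀ i, Injective (e i)) (w : Word G') : Word G where
  toList := wordMap e w
  ne_one := by
    intro l hl
    simp only [wordMap, List.mem_map] at hl
    obtain ⟨l', hl', rfl⟩ := hl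
    intro h1
    exact w.ne_one l' hl' (he l'.1 (by simpa using h1))
  chain_ne := by
    rw [wordMap, List.isChain_map]
    exact w.chain_ne

theorem wordMap_prod (he : ∀ i, Injective (e i)) (Ψ : PushoutI φ' →* PushoutI φ)
    (hof : ∀ i (g : G' i), Ψ (of i g) = of i (e i g)) (w : Word G') :
    ofCoprodI ((wordMapW e he w).prod) = Ψ (ofCoprodI w.prod) := by
  simp only [wordMapW, wordMap, Word.prod, map_list_prod, List.map_map]
  congr 1
  apply List.map_congr_left
  intro l _
  simp [ofCoprodI_of, hof]

theorem psi_injective (hφ : ∀ i, Injective (φ i)) (hφ' : ∀ i, Injective (φ' i))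
    (he : ∀ i, Injective (e i)) (heH : Injective eH)
    (hsat : ∀ i (g' : G' i), e i g' ∈ (φ i).range → g' ∈ (φ' i).range)
    (Ψ : PushoutI φ' →* PushoutI φ)
    (hof : ∀ i (g : G' i), Ψ (of i g) = of i (e i g))
    (hbase : ∀ h, Ψ (base φ' h) = base φ (eH h)) :
    Injective Ψ := by
  classical
  obtain ⟨d'⟩ := transversal_nonempty φ' hφ'
  obtain ⟨d, hd⟩ := exists_transversal_ext e d' hφ he hsat
  set M : NormalWord d' → NormalWord d := fun w =>
    { toWord := wordMapW e he w.toWord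
      head := eH w.head
      normalized := by
        intro i g hg
        simp only [wordMapW, wordMap, List.mem_map] at hg
        obtain ⟨⟨j, g'⟩, hl', heq⟩ := hg
        cases heq
        exact hd _ _ (w.normalized _ _ hl') } with hM
  have hMprod : ∀ w : NormalWord d', (M w).prod = Ψ w.prod := by
    intro w
    rw [hM]
    simp only [NormalWord.prod, map_mul, hbase, wordMap_prod e he Ψ hof]
  rw [injective_iff_map_eq_one]
  intro x hx
  have hw : (NormalWord.equiv (d := d') x).prod = x := NormalWord.equiv.symm_apply_apply x
  set w : NormalWord d' := NormalWord.equiv x with hwdef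
  have hMe : M w = NormalWord.empty := by
    apply NormalWord.prod_injective
    rw [hMprod, hw, hx, NormalWord.prod_empty]
  have hlist : w.toWord.toList = [] := by
    have := congrArg (fun u : NormalWord d => u.toWord.toList) hMe
    simp only [hM, wordMapW, wordMap] at this
    exact List.map_eq_nil_iff.mp this
  have hhead : w.head = 1 := by
    have := congrArg (fun u : NormalWord d => u.head) hMe
    simp only [hM] at this
    exact heH (by simpa using this)
  rw [← hw]
  simp [NormalWord.prod, Word.prod, hlist, hhead]

end AmalgAux2



open Monoid

/-- The relator set `{a · φ(a)⁻¹ : a ∈ A}` identifying `A ≤ G` with `B ≤ H` inside the free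
product `G ∗ H`. -/
def amalgRels {G H : Type} [Group G] [Group H] (A : Subgroup G) (B : Subgroup H)
    (φ : A ≃* B) : Set (Coprod G H) :=
  {w | ∃ a : A, w = Coprod.inl (a : G) * (Coprod.inr ((φ a : H)))⁻¹}

/-- The free product `G ∗_φ H` of `G` and `H` with the subgroups `A ≤ G` and `B ≤ H` amalgamated
along the isomorphism `φ : A → B`, i.e. `⟨G, H | a = φ(a) for all a ∈ A⟩`. -/
abbrev Amalg {G H : Type} [Group G] [Group H] (A : Subgroup G) (B : Subgroup H)
    (φ : A ≃* B) : Type :=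
  Coprod G H ⧸ Subgroup.normalClosure (amalgRels A B φ)

/-- The canonical homomorphism `G →* G ∗_φ H`. -/
def Amalg.inlHom {G H : Type} [Group G] [Group H] (A : Subgroup G) (B : Subgroup H)
    (φ : A ≃* B) : G →* Amalg A B φ :=
  (QuotientGroup.mk' _).comp Coprod.inl

/-- The canonical homomorphism `H →* G ∗_φ H`. -/
def Amalg.inrHom {G H : Type} [Group G] [Group H] (A : Subgroup G) (B : Subgroup H)
    (φ : A ≃* B) : H →* Amalg A B φ :=
  (QuotientGroup.mk' _).comp Coprod.inr


open Monoid Subgroup Function Monoid.PushoutI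

namespace AmalgAux3

abbrev fam (X Y : Type) : Bool → Type := fun b => Bool.rec Y X b

instance famGroup {X Y : Type} [Group X] [Group Y] : ∀ b, Group (fam X Y b) :=
  fun b => Bool.rec (motive := fun b => Group (fam X Y b)) ‹Group Y› ‹Group X› b

variable {G H : Type} [Group G] [Group H] (A : Subgroup G) (B : Subgroup H) (φ : A ≃* B)

def ψ : ∀ b, ↥A →* fam G H b :=
  fun b => Bool.rec (motive := fun b => ↥A →* fam G H b)
    (B.subtype.comp φ.toMonoidHom) A.subtype b

theorem rel_mk (a : A) :
    (Amalg.inrHom A B φ ((φ a : H)) : Amalg A B φ) = Amalg.inlHom A B φ (a : G) := by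
  show ((Coprod.inr ((φ a : H)) : Coprod G H) : Amalg A B φ)
      = ((Coprod.inl (a : G) : Coprod G H) : Amalg A B φ)
  rw [QuotientGroup.eq]
  have hr : Coprod.inl (a : G) * (Coprod.inr ((φ a : H)) : Coprod G H)⁻¹ ∈
      Subgroup.normalClosure (amalgRels A B φ) :=
    Subgroup.subset_normalClosure ⟨a, rfl⟩
  have := (Subgroup.normalClosure_normal (s := amalgRels A B φ)).conj_mem _ hr
    (Coprod.inr ((φ a : H)) : Coprod G H)⁻¹
  simpa [mul_assoc] using this

def toPush : Amalg A B φ →* PushoutI (ψ A B φ) :=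
  QuotientGroup.lift _
    (Coprod.lift (of (φ := ψ A B φ) true) (of (φ := ψ A B φ) false)) (by
    intro x hx
    have hker : x ∈ (Coprod.lift (of (φ := ψ A B φ) true) (of (φ := ψ A B φ) false)).ker := by
      refine Subgroup.normalClosure_le_normal ?_ hx
      rintro _ ⟨a, rfl⟩
      rw [SetLike.mem_coe, MonoidHom.mem_ker]
      rw [map_mul, map_inv, Coprod.lift_apply_inl, Coprod.lift_apply_inr]
      have h1 : of (φ := ψ A B φ) true ((a : A) : G) = base (ψ A B φ) a :=
        of_apply_eq_base (ψ A B φ) true a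
      have h2 : of (φ := ψ A B φ) false ((φ a : H)) = base (ψ A B φ) a :=
        of_apply_eq_base (ψ A B φ) false a
      rw [h1, h2, mul_inv_cancel]
    exact hker)

def famHom : ∀ b, fam G H b →* Amalg A B φ :=
  fun b => Bool.rec (motive := fun b => fam G H b →* Amalg A B φ)
    (Amalg.inrHom A B φ) (Amalg.inlHom A B φ) b

def fromPush : PushoutI (ψ A B φ) →* Amalg A B φ :=
  PushoutI.lift (famHom A B φ) ((Amalg.inlHom A B φ).comp A.subtype) (by
    intro b
    cases b with
    | true => rfl
    | false =>
      ext a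
      exact rel_mk A B φ a)

@[simp] theorem toPush_inl (g : G) : toPush A B φ (Amalg.inlHom A B φ g)
    = of (φ := ψ A B φ) true g := by
  simp [toPush, Amalg.inlHom]

@[simp] theorem toPush_inr (h : H) : toPush A B φ (Amalg.inrHom A B φ h)
    = of (φ := ψ A B φ) false h := by
  simp [toPush, Amalg.inrHom]

@[simp] theorem fromPush_of_true (g : G) :
    fromPush A B φ (of true g) = Amalg.inlHom A B φ g := by
  simp [fromPush, famHom]

@[simp] theorem fromPush_of_false (h : H) :
    fromPush A B φ (of false h) = Amalg.inrHom A B φ h := by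
  simp [fromPush, famHom]

theorem from_to : (fromPush A B φ).comp (toPush A B φ) = MonoidHom.id _ := by
  apply QuotientGroup.monoidHom_ext
  apply Coprod.hom_ext
  · ext x
    show fromPush A B φ (toPush A B φ (Amalg.inlHom A B φ x)) = Amalg.inlHom A B φ x
    rw [toPush_inl]
    exact fromPush_of_true A B φ x
    
  · ext x
    show fromPush A B φ (toPush A B φ (Amalg.inrHom A B φ x)) = Amalg.inrHom A B φ x
    rw [toPush_inr]
    exact fromPush_of_false A B φ x

theorem to_from : (toPush A B φ).comp (fromPush A B φ) = MonoidHom.id _ := by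
  apply PushoutI.hom_ext_nonempty
  intro b
  cases b with
  | true =>
    ext g
    show toPush A B φ (fromPush A B φ (of (φ := ψ A B φ) true g)) = of (φ := ψ A B φ) true g
    rw [fromPush_of_true]
    exact toPush_inl A B φ g
  | false =>
    ext h
    show toPush A B φ (fromPush A B φ (of (φ := ψ A B φ) false h)) = of (φ := ψ A B φ) false h
    rw [fromPush_of_false]
    exact toPush_inr A B φ h

theorem toPush_injective : Injective (toPush A B φ) := by
  intro x y hxy
  have h1 := DFunLike.congr_fun (from_to A B φ) x
  have h2 := DFunLike.congr_fun (from_to A B φ) y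
  simp only [MonoidHom.coe_comp, comp_apply, MonoidHom.id_apply] at h1 h2
  rw [← h1, ← h2, congrArg (fromPush A B φ) hxy]

theorem fromPush_injective : Injective (fromPush A B φ) := by
  intro x y hxy
  have h1 := DFunLike.congr_fun (to_from A B φ) x
  have h2 := DFunLike.congr_fun (to_from A B φ) y
  simp only [MonoidHom.coe_comp, comp_apply, MonoidHom.id_apply] at h1 h2
  rw [← h1, ← h2, hxy]

end AmalgAux3

namespace AmalgAux4

open Monoid Subgroup Function Monoid.PushoutI
open AmalgAux3

variable {G H : Type} [Group G] [Group H] (A : Subgroup G) (B : Subgroup H) (φ : A ≃* B)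
  (G' : Subgroup G) (H' : Subgroup H)

def eFam : ∀ b, fam ↥G' ↥H' b →* fam G H b :=
  fun b => Bool.rec (motive := fun b => fam ↥G' ↥H' b →* fam G H b) H'.subtype G'.subtype b

def eBase : ↥(A.comap G'.subtype) →* ↥A :=
  (G'.subtype.comp (A.comap G'.subtype).subtype).codRestrict A (fun a => a.2)

theorem main (φ' : (A.comap G'.subtype) ≃* (B.comap H'.subtype))
    (hφ' : ∀ a : A.comap G'.subtype,
      ((φ' a : H') : H) = ((φ ⟨((a : G') : G), a.2⟩ : B) : H)) :
    ∃ Φ : Amalg (A.comap G'.subtype) (B.comap H'.subtype) φ' →* Amalg A B φ,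
      (∀ g : G', Φ (Amalg.inlHom (A.comap G'.subtype) (B.comap H'.subtype) φ' g)
          = Amalg.inlHom A B φ (g : G)) ∧
      (∀ h : H', Φ (Amalg.inrHom (A.comap G'.subtype) (B.comap H'.subtype) φ' h)
          = Amalg.inrHom A B φ (h : H)) ∧
      Function.Injective Φ ∧
      Φ.range = G'.map (Amalg.inlHom A B φ) ⊔ H'.map (Amalg.inrHom A B φ) := by
  have hcomm : ∀ b, (eFam G' H' b).comp (ψ (A.comap G'.subtype) (B.comap H'.subtype) φ' b)
      = (ψ A B φ b).comp (eBase A G') := by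
    intro b
    cases b with
    | false =>
      ext a
      exact hφ' a
    | true => rfl
  have hcompat : ∀ b, ((of (φ := ψ A B φ) b).comp (eFam G' H' b)).comp
        (ψ (A.comap G'.subtype) (B.comap H'.subtype) φ' b)
      = ((base (ψ A B φ)).comp (eBase A G')) := by
    intro b
    rw [MonoidHom.comp_assoc, hcomm b, ← MonoidHom.comp_assoc, of_comp_eq_base]
  set Ψ : PushoutI (ψ (A.comap G'.subtype) (B.comap H'.subtype) φ') →* PushoutI (ψ A B φ) :=
    PushoutI.lift (fun b => (of (φ := ψ A B φ) b).comp (eFam G' H' b))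
      ((base (ψ A B φ)).comp (eBase A G')) hcompat with hΨdef
  have hΨof : ∀ b (x : fam ↥G' ↥H' b), Ψ (of b x) = of (φ := ψ A B φ) b (eFam G' H' b x) := by
    intro b x
    rw [hΨdef, lift_of]
    rfl
  have hΨbase : ∀ a, Ψ (base _ a) = base (ψ A B φ) (eBase A G' a) := by
    intro a
    rw [hΨdef, lift_base]
    rfl
  have hψinj : ∀ b, Injective (ψ A B φ b) := by
    intro b
    cases b with
    | true => exact Subgroup.subtype_injective A
    | false => exact (Subgroup.subtype_injective B).comp φ.injective
  have hψ'inj : ∀ b, Injective (ψ (A.comap G'.subtype) (B.comap H'.subtype) φ' b) := by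
    intro b
    cases b with
    | true => exact Subgroup.subtype_injective _
    | false => exact (Subgroup.subtype_injective _).comp φ'.injective
  have heinj : ∀ b, Injective (eFam G' H' b) := by
    intro b
    cases b with
    | true => exact Subgroup.subtype_injective _
    | false => exact Subgroup.subtype_injective _
  have heHinj : Injective (eBase A G') := by
    intro a a' h
    have h2 : ((a : G') : G) = ((a' : G') : G) := congrArg (fun z : ↥A => (z : G)) h
    exact Subtype.ext (Subtype.ext h2)
  have hsat : ∀ b (x : fam ↥G' ↥H' b), eFam G' H' b x ∈ (ψ A B φ b).range →
      x ∈ (ψ (A.comap G'.subtype) (B.comap H'.subtype) φ' b).range := by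
    intro b
    cases b with
    | true =>
      intro x hx
      obtain ⟨a, ha⟩ := hx
      have hm : x ∈ A.comap G'.subtype := by
        show G'.subtype x ∈ A
        have h2 : G'.subtype x = A.subtype a := ha.symm
        rw [h2]
        exact a.2
      exact ⟨⟨x, hm⟩, rfl⟩
    | false =>
      intro x hx
      obtain ⟨a, ha⟩ := hx
      have hm : x ∈ B.comap H'.subtype := by
        show H'.subtype x ∈ B
        have h2 : H'.subtype x = B.subtype (φ a) := ha.symm
        rw [h2]
        exact (φ a).2
      obtain ⟨a', ha'⟩ := φ'.surjective ⟨x, hm⟩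
      refine ⟨a', ?_⟩
      show (B.comap H'.subtype).subtype (φ' a') = x
      rw [ha']
      rfl
  have hΨinj : Injective Ψ :=
    AmalgAux2.psi_injective (eFam G' H') (eBase A G') hψinj hψ'inj heinj heHinj hsat Ψ hΨof hΨbase
  set Φ : Amalg (A.comap G'.subtype) (B.comap H'.subtype) φ' →* Amalg A B φ :=
    (fromPush A B φ).comp (Ψ.comp (toPush (A.comap G'.subtype) (B.comap H'.subtype) φ'))
    with hΦdef
  have heq1 : ∀ g : G', Φ (Amalg.inlHom (A.comap G'.subtype) (B.comap H'.subtype) φ' g)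
      = Amalg.inlHom A B φ (g : G) := by
    intro g
    show fromPush A B φ (Ψ (toPush _ _ φ' (Amalg.inlHom _ _ φ' g))) = _
    rw [toPush_inl]
    have h1 : Ψ (of (φ := ψ (A.comap G'.subtype) (B.comap H'.subtype) φ') true g)
        = of (φ := ψ A B φ) true ((g : G') : G) := hΨof true g
    rw [h1]
    exact fromPush_of_true A B φ _
  have heq2 : ∀ h : H', Φ (Amalg.inrHom (A.comap G'.subtype) (B.comap H'.subtype) φ' h)
      = Amalg.inrHom A B φ (h : H) := by
    intro h
    show fromPush A B φ (Ψ (toPush _ _ φ' (Amalg.inrHom _ _ φ' h))) = _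
    rw [toPush_inr]
    have h1 : Ψ (of (φ := ψ (A.comap G'.subtype) (B.comap H'.subtype) φ') false h)
        = of (φ := ψ A B φ) false ((h : H') : H) := hΨof false h
    rw [h1]
    exact fromPush_of_false A B φ _
  have htop : (Amalg.inlHom (A.comap G'.subtype) (B.comap H'.subtype) φ').range
      ⊔ (Amalg.inrHom (A.comap G'.subtype) (B.comap H'.subtype) φ').range = ⊤ := by
    rw [Amalg.inlHom, Amalg.inrHom, ← MonoidHom.map_range, ← MonoidHom.map_range,
      ← Subgroup.map_sup, Coprod.range_inl_sup_range_inr, ← MonoidHom.range_eq_map,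
      MonoidHom.range_eq_top]
    exact QuotientGroup.mk'_surjective _
  refine ⟨Φ, heq1, heq2,
    (fromPush_injective A B φ).comp (hΨinj.comp (toPush_injective _ _ φ')), ?_⟩
  have hc1 : Φ.comp (Amalg.inlHom (A.comap G'.subtype) (B.comap H'.subtype) φ')
      = (Amalg.inlHom A B φ).comp G'.subtype := MonoidHom.ext heq1
  have hc2 : Φ.comp (Amalg.inrHom (A.comap G'.subtype) (B.comap H'.subtype) φ')
      = (Amalg.inrHom A B φ).comp H'.subtype := MonoidHom.ext heq2
  rw [MonoidHom.range_eq_map, ← htop, Subgroup.map_sup, MonoidHom.map_range, MonoidHom.map_range,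
    hc1, hc2, ← MonoidHom.map_range, ← MonoidHom.map_range, Subgroup.range_subtype,
    Subgroup.range_subtype]

end AmalgAux4

/-- **Lemma (subgroups of amalgamated products), part (1).**  Let `Γ = G ∗_φ H` with amalgamated
subgroups `A ≤ G`, `B ≤ H` along `φ : A ≃ B`.  Let `G′ ≤ G` and `H′ ≤ H` be subgroups such that
`φ` restricts to an isomorphism `φ′` of `A′ = G′ ∩ A` onto `B′ = H′ ∩ B` (the restriction being
encoded by the compatibility hypothesis `hφ'`).  Then the subgroup `Γ′ = ⟨G′, H′⟩` of `Γ` is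
naturally isomorphic to `G′ ∗_{φ′} H′`: the canonical homomorphism `G′ ∗_{φ′} H′ → Γ` (which
exists and is unique, sending `G′` and `H′` identically onto their images) is injective and its
range is `Γ′`. -/
theorem amalg_subgroup_structure {G H : Type} [Group G] [Group H]
    (A : Subgroup G) (B : Subgroup H) (φ : A ≃* B)
    (G' : Subgroup G) (H' : Subgroup H)
    (φ' : (A.comap G'.subtype) ≃* (B.comap H'.subtype))
    (hφ' : ∀ a : A.comap G'.subtype,
      ((φ' a : H') : H) = ((φ ⟨((a : G') : G), a.2⟩ : B) : H)) :
    ∃ Φ : Amalg (A.comap G'.subtype) (B.comap H'.subtype) φ' →* Amalg A B φ,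
      (∀ g : G', Φ (Amalg.inlHom (A.comap G'.subtype) (B.comap H'.subtype) φ' g)
          = Amalg.inlHom A B φ (g : G)) ∧
      (∀ h : H', Φ (Amalg.inrHom (A.comap G'.subtype) (B.comap H'.subtype) φ' h)
          = Amalg.inrHom A B φ (h : H)) ∧
      Function.Injective Φ ∧
      Φ.range = G'.map (Amalg.inlHom A B φ) ⊔ H'.map (Amalg.inrHom A B φ) := by
  exact AmalgAux4.main A B φ G' H' φ' hφ'
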